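/- Let f : [0,1] → ℝ be a continuous function whose graph G = {(x, f(x)) : x ∈ [0,1]} is a self-similar set. Then f(x) = f(0) + (f(1) − f(0))·x for all x ∈ [0,1]. -/

import Mathlib

/-- The rotation of ℝ² by angle θ, given by the matrix ((cos θ, sin θ), (−sin θ, cos θ)). -/
noncomputable def rot (θ : ℝ) (v : ℝ × ℝ) : ℝ × ℝ :=
  (v.1 * Real.cos θ + v.2 * Real.sin θ, -v.1 * Real.sin θ + v.2 * Real.cos θ)

/-- A (contracting) similitude of ℝ²: a map `S v = r • ρ_θ v + b` with `r ∈ (0,1)`. -/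
def IsSimilitude (S : ℝ × ℝ → ℝ × ℝ) : Prop :=
  ∃ (r θ : ℝ) (b : ℝ × ℝ), r ∈ Set.Ioo (0 : ℝ) 1 ∧ ∀ v, S v = r • rot θ v + b

/-- A compact set `K ⊆ ℝ²` is self-similar if it is the union of its images under
finitely many (at least one) contracting similitudes. -/
def IsSelfSimilar (K : Set (ℝ × ℝ)) : Prop :=
  IsCompact K ∧ ∃ (k : ℕ) (S : Fin k → ℝ × ℝ → ℝ × ℝ),
    0 < k ∧ (∀ i, IsSimilitude (S i)) ∧ K = ⋃ i, S i '' K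

/-- similitude map from data -/
noncomputable def simMap (ρ ψ : ℝ) (c : ℝ × ℝ) (v : ℝ × ℝ) : ℝ × ℝ := ρ • rot ψ v + c

lemma simMap_def (ρ ψ : ℝ) (c v : ℝ × ℝ) :
    simMap ρ ψ c v = (ρ * (v.1 * Real.cos ψ + v.2 * Real.sin ψ) + c.1,
      ρ * (-v.1 * Real.sin ψ + v.2 * Real.cos ψ) + c.2) := by
  simp [simMap, rot, Prod.ext_iff, smul_eq_mul]

lemma simMap_comp (r1 θ1 : ℝ) (b1 : ℝ × ℝ) (r2 θ2 : ℝ) (b2 : ℝ × ℝ) (v : ℝ × ℝ) :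
    simMap r1 θ1 b1 (simMap r2 θ2 b2 v)
      = simMap (r1 * r2) (θ1 + θ2) (simMap r1 θ1 b1 b2) v := by
  simp only [simMap_def, Real.cos_add, Real.sin_add, Prod.ext_iff]
  constructor <;> ring

lemma simMap_id (v : ℝ × ℝ) : simMap 1 0 0 v = v := by
  simp [simMap_def]

lemma simMap_inj {ρ ψ : ℝ} (hρ : 0 < ρ) (c : ℝ × ℝ) : Function.Injective (simMap ρ ψ c) := by
  intro v w h
  simp only [simMap_def, Prod.ext_iff] at h
  obtain ⟨h1, h2⟩ := h
  have hc := Real.sin_sq_add_cos_sq ψ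
  have hX : ρ * ((v.1 - w.1) * Real.cos ψ + (v.2 - w.2) * Real.sin ψ) = 0 := by
    linear_combination h1
  have hY : ρ * (-(v.1 - w.1) * Real.sin ψ + (v.2 - w.2) * Real.cos ψ) = 0 := by
    linear_combination h2
  have aX : (v.1 - w.1) * Real.cos ψ + (v.2 - w.2) * Real.sin ψ = 0 :=
    (mul_eq_zero.mp hX).resolve_left hρ.ne'
  have aY : -(v.1 - w.1) * Real.sin ψ + (v.2 - w.2) * Real.cos ψ = 0 :=
    (mul_eq_zero.mp hY).resolve_left hρ.ne'
  have h1' : v.1 = w.1 := by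
    linear_combination Real.cos ψ * aX - Real.sin ψ * aY - (v.1 - w.1) * hc
  have h2' : v.2 = w.2 := by
    linear_combination Real.sin ψ * aX + Real.cos ψ * aY - (v.2 - w.2) * hc
  exact Prod.ext h1' h2' 

/-- twice signed area -/
def Ar (p q w : ℝ × ℝ) : ℝ := (q.1 - p.1) * (w.2 - p.2) - (q.2 - p.2) * (w.1 - p.1)

lemma Ar_simMap (ρ ψ : ℝ) (c : ℝ × ℝ) (p q w : ℝ × ℝ) :
    Ar (simMap ρ ψ c p) (simMap ρ ψ c q) (simMap ρ ψ c w) = ρ ^ 2 * Ar p q w := by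
  have hc := Real.sin_sq_add_cos_sq ψ
  simp only [Ar, simMap_def]
  linear_combination (ρ ^ 2 * ((q.1 - p.1) * (w.2 - p.2) - (q.2 - p.2) * (w.1 - p.1))) * hc

lemma chain_lemma (f : ℝ → ℝ) (Ω δ : ℝ) (hΩ : 0 ≤ Ω) (hδ : 0 ≤ δ) :
    ∀ (n : ℕ) (F : Finset (ℝ × ℝ)) (t π y : ℝ), F.card ≤ n → π ≤ t → t ≤ y →
    (∀ p ∈ F, p.2 - p.1 ≤ δ ∧ ∀ a b : ℝ, p.1 ≤ a → a ≤ p.2 → p.1 ≤ b → b ≤ p.2 →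
      |f a - f b| ≤ Ω * (p.2 - p.1)) →
    (∀ z, t < z → z ≤ y → ∃ p ∈ F, p.1 ≤ z ∧ z ≤ p.2) →
    (∀ p ∈ F, t < p.2 → π < p.1) →
    |f y - f t| ≤ Ω * (2*y + 2*δ - π - t) := by
  intro n
  induction n with
  | zero =>
    intro F t π y hcard hπt hty hint hcov _
    rcases eq_or_lt_of_le hty with rfl | hty'
    · simpa using mul_nonneg hΩ (by linarith)
    · exfalso
      obtain ⟨p, hp, _, _⟩ := hcov y hty' le_rfl
      simp [Finset.card_eq_zero.mp (Nat.le_zero.mp hcard)] at hp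
  | succ n ih =>
    intro F t π y hcard hπt hty hint hcov hinv
    rcases eq_or_lt_of_le hty with rfl | hty'
    · simpa using mul_nonneg hΩ (by linarith)
    -- find a candidate interval containing t and extending to the right
    have hcand : ∃ p ∈ F, p.1 ≤ t ∧ t < p.2 := by
      by_contra hno
      push_neg at hno
      set D := F.filter (fun p => t < p.1) with hD
      rcases Finset.eq_empty_or_nonempty D with hDe | hDne
      · obtain ⟨p, hp, hp1, hp2⟩ := hcov y hty' le_rfl
        have h2 : t < p.2 := lt_of_lt_of_le hty' hp2
        have h1 : t < p.1 := by
          by_contra hle; push_neg at hle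
          exact absurd h2 (not_lt.mpr (hno p hp hle))
        have : p ∈ D := Finset.mem_filter.mpr ⟨hp, h1⟩
        rw [hDe] at this
        exact absurd this (Finset.notMem_empty p)
      · obtain ⟨pm, hpmD, hpmmin⟩ := Finset.exists_min_image D (fun p => p.1) hDne
        have htm : t < pm.1 := (Finset.mem_filter.mp hpmD).2
        set z := min y ((t + pm.1)/2) with hz
        have htz : t < z := lt_min hty' (by linarith)
        have hzy : z ≤ y := min_le_left _ _
        obtain ⟨p, hp, hp1, hp2⟩ := hcov z htz hzy
        have h2 : t < p.2 := lt_of_lt_of_le htz hp2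
        have h1 : t < p.1 := by
          by_contra hle; push_neg at hle
          exact absurd h2 (not_lt.mpr (hno p hp hle))
        have hpD : p ∈ D := Finset.mem_filter.mpr ⟨hp, h1⟩
        have hmle : pm.1 ≤ p.1 := hpmmin p hpD
        have : z ≤ (t + pm.1)/2 := min_le_right _ _
        linarith
    obtain ⟨q, hqF, hq1, hq2⟩ := hcand
    -- choose the candidate with maximal right endpoint
    set C := F.filter (fun p => p.1 ≤ t ∧ t < p.2) with hC
    have hCne : C.Nonempty := ⟨q, Finset.mem_filter.mpr ⟨hqF, hq1, hq2⟩⟩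
    obtain ⟨p, hpC, hpmax⟩ := Finset.exists_max_image C (fun p => p.2) hCne
    obtain ⟨hpF, hpt1, hpt2⟩ := Finset.mem_filter.mp hpC
    have hlπ : π < p.1 := hinv p hpF hpt2
    have hosc := hint p hpF
    rcases le_or_gt y p.2 with hcase | hcase
    · -- base: interval reaches y
      have h1 : |f y - f t| ≤ Ω * (p.2 - p.1) :=
        hosc.2 y t (le_trans hpt1 hty) hcase hpt1 (le_of_lt hpt2)
      have h2 : Ω * (p.2 - p.1) ≤ Ω * δ := mul_le_mul_of_nonneg_left hosc.1 hΩ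
      have h3 : Ω * δ ≤ Ω * (2*y + 2*δ - π - t) :=
        mul_le_mul_of_nonneg_left (by linarith) hΩ
      linarith
    · -- recurse past p.2
      have hrec := ih (F.erase p) p.2 t y
        (by
          have := Finset.card_erase_of_mem hpF
          omega)
        (le_of_lt hpt2) (le_of_lt hcase)
        (fun r hr => hint r (Finset.mem_of_mem_erase hr))
        (fun z hz1 hz2 => by
          obtain ⟨r, hrF, hr1, hr2⟩ := hcov z (lt_trans hpt2 hz1) hz2
          refine ⟨r, Finset.mem_erase.mpr ⟨?_, hrF⟩, hr1, hr2⟩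
          intro hrfl
          rw [hrfl] at hr2
          exact absurd hr2 (not_le.mpr hz1))
        (fun r hr h2 => by
          by_contra hle
          push_neg at hle
          have hrC : r ∈ C := Finset.mem_filter.mpr
            ⟨Finset.mem_of_mem_erase hr, hle, lt_trans hpt2 h2⟩
          exact absurd (hpmax r hrC) (not_le.mpr h2))
      have hstep : |f p.2 - f t| ≤ Ω * (p.2 - p.1) :=
        hosc.2 p.2 t (le_trans hpt1 (le_of_lt hpt2)) le_rfl hpt1 (le_of_lt hpt2)
      have hmono : Ω * (p.2 - p.1) ≤ Ω * (p.2 - π) :=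
        mul_le_mul_of_nonneg_left (by linarith) hΩ
      calc |f y - f t| ≤ |f y - f p.2| + |f p.2 - f t| := abs_sub_le _ _ _
        _ ≤ Ω * (2*y + 2*δ - t - p.2) + Ω * (p.2 - π) := add_le_add hrec (le_trans hstep hmono)
        _ = Ω * (2*y + 2*δ - π - t) := by ring

open Set in
/-- an affine "piece" of the self-similar structure, with no rotation -/
def Good (f : ℝ → ℝ) (d : ℝ × ℝ × ℝ) : Prop :=
  d.1 ≠ 0 ∧ ∀ x ∈ Icc (0:ℝ) 1, (d.1 * x + d.2.1 ∈ Icc (0:ℝ) 1 ∧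
    f (d.1 * x + d.2.1) = d.1 * f x + d.2.2)

open Set in
lemma Good.comp {f : ℝ → ℝ} {d e : ℝ × ℝ × ℝ} (hd : Good f d) (he : Good f e) :
    Good f (d.1 * e.1, d.1 * e.2.1 + d.2.1, d.1 * e.2.2 + d.2.2) := by
  obtain ⟨hd0, hd1⟩ := hd
  obtain ⟨he0, he1⟩ := he
  refine ⟨mul_ne_zero hd0 he0, fun x hx => ?_⟩
  obtain ⟨hmem, heq⟩ := he1 x hx
  obtain ⟨hmem', heq'⟩ := hd1 _ hmem
  have harg : d.1 * (e.1 * x + e.2.1) + d.2.1 = d.1 * e.1 * x + (d.1 * e.2.1 + d.2.1) := by ring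
  refine ⟨by rw [← harg]; exact hmem', ?_⟩
  rw [← harg, heq', heq]; ring

open Set in
/-- a point of the image interval of a good piece comes from a point of `[0,1]` -/
lemma Good.mem_image {f : ℝ → ℝ} {d : ℝ × ℝ × ℝ} (hd : Good f d) {a : ℝ}
    (h1 : min d.2.1 (d.1 + d.2.1) ≤ a) (h2 : a ≤ max d.2.1 (d.1 + d.2.1)) :
    ∃ x ∈ Icc (0:ℝ) 1, a = d.1 * x + d.2.1 := by
  have hs0 := hd.1
  refine ⟨(a - d.2.1) / d.1, ?_, by field_simp; ring⟩
  rcases lt_or_gt_of_ne hd.1 with hs | hs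
  · have hmin : min d.2.1 (d.1 + d.2.1) = d.1 + d.2.1 := min_eq_right (by linarith)
    have hmax : max d.2.1 (d.1 + d.2.1) = d.2.1 := max_eq_left (by linarith)
    rw [hmin] at h1; rw [hmax] at h2
    constructor
    · exact div_nonneg_iff.mpr (Or.inr ⟨by linarith, hs.le⟩)
    · rw [div_le_one_iff]
      exact Or.inr (Or.inr ⟨hs, by linarith⟩)
  · have hmin : min d.2.1 (d.1 + d.2.1) = d.2.1 := min_eq_left (by linarith)
    have hmax : max d.2.1 (d.1 + d.2.1) = d.1 + d.2.1 := max_eq_right (by linarith)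
    rw [hmin] at h1; rw [hmax] at h2
    constructor
    · exact div_nonneg (by linarith) hs.le
    · rw [div_le_one hs]; linarith

open Set Finset in
lemma level_families {f : ℝ → ℝ} {k : ℕ} (hk : 0 < k) (dat : Fin k → ℝ × ℝ × ℝ)
    {rmax : ℝ} (hr : ∀ i, |(dat i).1| ≤ rmax)
    (hgood : ∀ i, Good f (dat i))
    (hcov : ∀ z ∈ Icc (0:ℝ) 1, ∃ i, ∃ x ∈ Icc (0:ℝ) 1, z = (dat i).1 * x + (dat i).2.1) :
    ∀ n : ℕ, ∃ Fn : Finset (ℝ × ℝ × ℝ),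
      (∀ d ∈ Fn, Good f d ∧ |d.1| ≤ rmax ^ n) ∧
      (∀ z ∈ Icc (0:ℝ) 1, ∃ d ∈ Fn, ∃ x ∈ Icc (0:ℝ) 1, z = d.1 * x + d.2.1) := by
  intro n
  induction n with
  | zero =>
    refine ⟨{(1, 0, 0)}, ?_, ?_⟩
    · intro d hd
      rw [Finset.mem_singleton] at hd
      subst hd
      exact ⟨⟨one_ne_zero, fun x hx => by simpa using hx⟩, by norm_num⟩
    · intro z hz
      exact ⟨(1, 0, 0), Finset.mem_singleton_self _, z, hz, by norm_num⟩
  | succ n ih =>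
    obtain ⟨Fn, hFn1, hFn2⟩ := ih
    refine ⟨(Finset.univ ×ˢ Fn).image
      (fun id : Fin k × (ℝ × ℝ × ℝ) => ((dat id.1).1 * id.2.1,
        (dat id.1).1 * id.2.2.1 + (dat id.1).2.1, (dat id.1).1 * id.2.2.2 + (dat id.1).2.2)),
      ?_, ?_⟩
    · intro d hd
      obtain ⟨⟨i, e⟩, hmem, rfl⟩ := Finset.mem_image.mp hd
      obtain ⟨hge, hre⟩ := hFn1 e (Finset.mem_product.mp hmem).2
      refine ⟨(hgood i).comp hge, ?_⟩
      simp only [abs_mul, pow_succ]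
      rw [mul_comm (rmax ^ n) rmax]
      exact mul_le_mul (hr i) hre (abs_nonneg _) ((abs_nonneg _).trans (hr i))
    · intro z hz
      obtain ⟨i, x, hx, hzx⟩ := hcov z hz
      obtain ⟨e, he, x', hx', hxx'⟩ := hFn2 x hx
      refine ⟨_, Finset.mem_image.mpr ⟨(i, e), Finset.mem_product.mpr ⟨Finset.mem_univ _, he⟩,
        rfl⟩, x', hx', ?_⟩
      simp only
      rw [hzx, hxx']; ring

open Set in
lemma Good.image_mem {f : ℝ → ℝ} {d : ℝ × ℝ × ℝ} (hd : Good f d) {x : ℝ}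
    (hx : x ∈ Icc (0:ℝ) 1) :
    min d.2.1 (d.1 + d.2.1) ≤ d.1 * x + d.2.1 ∧ d.1 * x + d.2.1 ≤ max d.2.1 (d.1 + d.2.1) := by
  obtain ⟨hx0, hx1⟩ := hx
  rcases lt_or_gt_of_ne hd.1 with hs | hs
  · constructor
    · exact le_trans (min_le_right _ _) (by nlinarith)
    · exact le_trans (by nlinarith) (le_max_left _ _)
  · constructor
    · exact le_trans (min_le_left _ _) (by nlinarith)
    · exact le_trans (by nlinarith) (le_max_right _ _)

open Set in
lemma lipschitz_of_good {f : ℝ → ℝ} {Ω rmax : ℝ} (hΩ : 0 ≤ Ω)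
    (hΩb : ∀ a ∈ Icc (0:ℝ) 1, ∀ b ∈ Icc (0:ℝ) 1, |f a - f b| ≤ Ω)
    (hr0 : 0 < rmax) (hr1 : rmax < 1)
    {k : ℕ} (hk : 0 < k) (dat : Fin k → ℝ × ℝ × ℝ)
    (hr : ∀ i, |(dat i).1| ≤ rmax)
    (hgood : ∀ i, Good f (dat i))
    (hcov : ∀ z ∈ Icc (0:ℝ) 1, ∃ i, ∃ x ∈ Icc (0:ℝ) 1, z = (dat i).1 * x + (dat i).2.1) :
    ∀ x ∈ Icc (0:ℝ) 1, ∀ y ∈ Icc (0:ℝ) 1, x ≤ y → |f y - f x| ≤ 5 * Ω * (y - x) := by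
  intro x hx y hy hxy
  rcases eq_or_lt_of_le hxy with rfl | hlt
  · simp
  obtain ⟨n, hn⟩ := exists_pow_lt_of_lt_one (sub_pos.mpr hlt) hr1
  set δ := rmax ^ n with hδdef
  have hδ0 : 0 < δ := pow_pos hr0 n
  obtain ⟨Fn, hFn1, hFn2⟩ := level_families hk dat hr hgood hcov n
  set F : Finset (ℝ × ℝ) := Fn.image (fun d => (min d.2.1 (d.1 + d.2.1),
    max d.2.1 (d.1 + d.2.1))) with hF
  have key := chain_lemma f Ω δ hΩ hδ0.le F.card F x (x - δ) y le_rfl (by linarith) hxy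
    ?_ ?_ ?_
  · calc |f y - f x| ≤ Ω * (2*y + 2*δ - (x - δ) - x) := key
      _ ≤ 5 * Ω * (y - x) := by nlinarith
  · -- widths and oscillation
    intro p hp
    obtain ⟨d, hd, rfl⟩ := Finset.mem_image.mp hp
    obtain ⟨hgd, hrd⟩ := hFn1 d hd
    have hwidth : max d.2.1 (d.1 + d.2.1) - min d.2.1 (d.1 + d.2.1) = |d.1| := by
      rw [max_sub_min_eq_abs]
      simp [abs_sub_comm]
    constructor
    · simp only
      rw [hwidth]; exact hrd
    · intro a b ha1 ha2 hb1 hb2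
      obtain ⟨xa, hxa, rfl⟩ := hgd.mem_image ha1 ha2
      obtain ⟨xb, hxb, rfl⟩ := hgd.mem_image hb1 hb2
      rw [(hgd.2 xa hxa).2, (hgd.2 xb hxb).2]
      have : d.1 * f xa + d.2.2 - (d.1 * f xb + d.2.2) = d.1 * (f xa - f xb) := by ring
      rw [this, abs_mul]
      simp only
      rw [hwidth, mul_comm]
      exact mul_le_mul_of_nonneg_right (hΩb _ hxa _ hxb) (abs_nonneg _)
  · -- cover
    intro z hz1 hz2
    have hzI : z ∈ Icc (0:ℝ) 1 := ⟨le_trans hx.1 hz1.le, le_trans hz2 hy.2⟩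
    obtain ⟨d, hd, xz, hxz, rfl⟩ := hFn2 z hzI
    refine ⟨(min d.2.1 (d.1 + d.2.1), max d.2.1 (d.1 + d.2.1)),
      Finset.mem_image.mpr ⟨d, hd, rfl⟩, ?_⟩
    exact (hFn1 d hd).1.image_mem hxz
  · -- invariant
    intro p hp hp2
    obtain ⟨d, hd, rfl⟩ := Finset.mem_image.mp hp
    obtain ⟨hgd, hrd⟩ := hFn1 d hd
    have hwidth : max d.2.1 (d.1 + d.2.1) - min d.2.1 (d.1 + d.2.1) = |d.1| := by
      rw [max_sub_min_eq_abs]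
      simp [abs_sub_comm]
    simp only at hp2 ⊢
    have : |d.1| ≤ δ := hrd
    linarith [hwidth]

open Set MeasureTheory in
lemma exists_diff_of_monotoneOn {g : ℝ → ℝ} (hg : MonotoneOn g (Icc (0:ℝ) 1)) :
    ∃ x₀ ∈ Ioo (0:ℝ) 1, DifferentiableAt ℝ g x₀ := by
  set H : ℝ → ℝ := fun x => g (max 0 (min 1 x)) with hH
  have hmem : ∀ x : ℝ, max 0 (min 1 x) ∈ Icc (0:ℝ) 1 :=
    fun x => ⟨le_max_left _ _, max_le zero_le_one (min_le_left _ _)⟩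
  have hHmono : Monotone H := fun a b hab =>
    hg (hmem a) (hmem b) (max_le_max le_rfl (min_le_min le_rfl hab))
  have hae := hHmono.ae_differentiableAt
  rw [MeasureTheory.ae_iff] at hae
  have hpt : ∃ x₀ ∈ Ioo (0:ℝ) 1, DifferentiableAt ℝ H x₀ := by
    by_contra hno
    push_neg at hno
    have : Ioo (0:ℝ) 1 ⊆ {x | ¬ DifferentiableAt ℝ H x} := fun x hx => hno x hx
    have hle := measure_mono (μ := volume) this
    rw [hae, Real.volume_Ioo] at hle
    simp at hle
  obtain ⟨x₀, hx₀, hdiff⟩ := hpt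
  refine ⟨x₀, hx₀, ?_⟩
  have hev : H =ᶠ[nhds x₀] g := by
    filter_upwards [isOpen_Ioo.mem_nhds hx₀] with x hx
    have h1 : min 1 x = x := min_eq_right hx.2.le
    have h2 : max 0 x = x := max_eq_right hx.1.le
    simp [hH, h1, h2]
  exact (Filter.EventuallyEq.differentiableAt_iff hev).mp hdiff

open Set in
lemma exists_diff_point {f : ℝ → ℝ} {lam : ℝ}
    (h : MonotoneOn (fun x => f x + lam * x) (Icc (0:ℝ) 1) ∨
         AntitoneOn (fun x => f x + lam * x) (Icc (0:ℝ) 1)) :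
    ∃ x₀ ∈ Ioo (0:ℝ) 1, DifferentiableAt ℝ f x₀ := by
  have key : ∃ x₀ ∈ Ioo (0:ℝ) 1, DifferentiableAt ℝ (fun x => f x + lam * x) x₀ := by
    rcases h with h | h
    · exact exists_diff_of_monotoneOn h
    · obtain ⟨x₀, hx₀, hd⟩ := exists_diff_of_monotoneOn
        (g := fun x => -(f x + lam * x)) (fun a ha b hb hab => neg_le_neg (h ha hb hab))
      exact ⟨x₀, hx₀, differentiableAt_neg_iff.mp hd⟩
  obtain ⟨x₀, hx₀, hd⟩ := key
  refine ⟨x₀, hx₀, ?_⟩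
  have : f = fun x => (f x + lam * x) - lam * x := by funext x; ring
  rw [this]
  exact hd.sub ((differentiableAt_id.const_mul lam))

open Set

/-- `simMap ρ ψ c` maps the graph of `f` over `[0,1]` into itself. -/
def MapsG (f : ℝ → ℝ) (ρ ψ : ℝ) (c : ℝ × ℝ) : Prop :=
  ∀ x ∈ Icc (0:ℝ) 1, ∃ t ∈ Icc (0:ℝ) 1, simMap ρ ψ c (x, f x) = (t, f t)

lemma copies {f : ℝ → ℝ} {k : ℕ} (r θ : Fin k → ℝ) (b : Fin k → ℝ × ℝ) {rmax : ℝ}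
    (hri : ∀ i, 0 < r i) (hrmax : ∀ i, r i ≤ rmax)
    (hmaps : ∀ i, MapsG f (r i) (θ i) (b i))
    (hcov : ∀ z ∈ Icc (0:ℝ) 1, ∃ i, ∃ t ∈ Icc (0:ℝ) 1,
      simMap (r i) (θ i) (b i) (t, f t) = (z, f z)) :
    ∀ n : ℕ, ∀ z ∈ Icc (0:ℝ) 1, ∃ ρ ψ : ℝ, ∃ c : ℝ × ℝ, 0 < ρ ∧ ρ ≤ rmax ^ n ∧
      MapsG f ρ ψ c ∧ ∃ t ∈ Icc (0:ℝ) 1, simMap ρ ψ c (t, f t) = (z, f z) := by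
  intro n
  induction n with
  | zero =>
    intro z hz
    exact ⟨1, 0, 0, one_pos, by norm_num, fun x hx => ⟨x, hx, simMap_id _⟩,
      z, hz, simMap_id _⟩
  | succ n ih =>
    intro z hz
    obtain ⟨i, t, ht, hteq⟩ := hcov z hz
    obtain ⟨ρ, ψ, c, hρ, hρn, hm, t', ht', ht'eq⟩ := ih t ht
    have hrmax0 : 0 ≤ rmax := (hri i).le.trans (hrmax i)
    refine ⟨r i * ρ, θ i + ψ, simMap (r i) (θ i) (b i) c,
      mul_pos (hri i) hρ, ?_, ?_, t', ht', ?_⟩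
    · rw [pow_succ, mul_comm (rmax ^ n) rmax]
      exact mul_le_mul (hrmax i) hρn hρ.le hrmax0
    · intro x hx
      obtain ⟨u, hu, hueq⟩ := hm x hx
      obtain ⟨w, hw, hweq⟩ := hmaps i u hu
      exact ⟨w, hw, by rw [← simMap_comp, hueq, hweq]⟩
    · rw [← simMap_comp, ht'eq, hteq]

lemma affine_of_diffpt {f : ℝ → ℝ} (hf : ContinuousOn f (Icc (0:ℝ) 1)) {rmax : ℝ}
    (hr0 : 0 < rmax) (hr1 : rmax < 1)
    (hcopies : ∀ n : ℕ, ∀ z ∈ Icc (0:ℝ) 1, ∃ ρ ψ : ℝ, ∃ c : ℝ × ℝ, 0 < ρ ∧ ρ ≤ rmax ^ n ∧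
      MapsG f ρ ψ c ∧ ∃ t ∈ Icc (0:ℝ) 1, simMap ρ ψ c (t, f t) = (z, f z))
    {x₀ : ℝ} (hx₀ : x₀ ∈ Ioo (0:ℝ) 1) (hdiff : DifferentiableAt ℝ f x₀) :
    ∀ y ∈ Icc (0:ℝ) 1, f y = f 0 + (f 1 - f 0) * y := by
  intro y hy
  set Δ : ℝ := f 1 - f 0 with hΔ
  set C : ℝ := Real.sqrt (1 + Δ ^ 2) with hCdef
  have hC2 : C ^ 2 = 1 + Δ ^ 2 := Real.sq_sqrt (by positivity)
  have hC0 : 0 < C := Real.sqrt_pos.mpr (by positivity)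
  have habs : ∀ ε : ℝ, 0 < ε → |f y - f 0 - Δ * y| ≤ ε * (4 * C ^ 2) := by
    intro ε hε
    obtain ⟨m, hder⟩ : ∃ m, HasDerivAt f m x₀ := ⟨deriv f x₀, hdiff.hasDerivAt⟩
    have hlo := hasDerivAt_iff_isLittleO.mp hder
    have hev := Asymptotics.isLittleO_iff.mp hlo hε
    obtain ⟨δ, hδpos, hδ⟩ := Metric.eventually_nhds_iff.mp hev
    obtain ⟨n, hn⟩ := exists_pow_lt_of_lt_one (div_pos hδpos hC0) hr1
    obtain ⟨ρ, ψ, c, hρ, hρn, hm, t₀, ht₀, ht₀eq⟩ :=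
      hcopies n x₀ ⟨hx₀.1.le, hx₀.2.le⟩
    set φ : ℝ → ℝ := fun x => ρ * (x * Real.cos ψ + f x * Real.sin ψ) + c.1 with hφdef
    have h1 : ∀ x ∈ Icc (0:ℝ) 1, φ x ∈ Icc (0:ℝ) 1 ∧
        simMap ρ ψ c (x, f x) = (φ x, f (φ x)) := by
      intro x hx
      obtain ⟨t, ht, hteq⟩ := hm x hx
      have htval : t = φ x := by
        have := congrArg Prod.fst hteq
        rw [simMap_def] at this
        simpa [hφdef] using this.symm
      subst htval
      exact ⟨ht, hteq⟩
    have hinj : InjOn φ (Icc (0:ℝ) 1) := by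
      intro a ha b hb hab
      have e1 := (h1 a ha).2
      have e2 := (h1 b hb).2
      rw [hab] at e1
      have := simMap_inj hρ c (e1.trans e2.symm)
      exact congrArg Prod.fst this
    have hcont : ContinuousOn φ (Icc (0:ℝ) 1) := by
      apply ContinuousOn.add ?_ continuousOn_const
      apply ContinuousOn.const_smul ?_ ρ
      exact ((continuousOn_id.mul continuousOn_const).add (hf.mul continuousOn_const))
    have hmono := ContinuousOn.strictMonoOn_of_injOn_Icc' zero_le_one hcont hinj
    have hbetween : ∀ x ∈ Icc (0:ℝ) 1,
        min (φ 0) (φ 1) ≤ φ x ∧ φ x ≤ max (φ 0) (φ 1) := by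
      intro x hx
      have h0 : (0:ℝ) ∈ Icc (0:ℝ) 1 := by norm_num
      have hone : (1:ℝ) ∈ Icc (0:ℝ) 1 := by norm_num
      rcases hmono with hm' | hm'
      · exact ⟨le_trans (min_le_left _ _) (hm'.monotoneOn h0 hx hx.1),
          le_trans (hm'.monotoneOn hx hone hx.2) (le_max_right _ _)⟩
      · exact ⟨le_trans (min_le_right _ _) (hm'.antitoneOn hx hone hx.2),
          le_trans (hm'.antitoneOn h0 hx hx.1) (le_max_left _ _)⟩
    have hchord : |φ 1 - φ 0| ≤ ρ * C := by
      have hval : φ 1 - φ 0 = ρ * (Real.cos ψ + Δ * Real.sin ψ) := by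
        simp only [hφdef, hΔ]; ring
      have hsq : (Real.cos ψ + Δ * Real.sin ψ) ^ 2 ≤ C ^ 2 := by
        nlinarith [sq_nonneg (Δ * Real.cos ψ - Real.sin ψ), Real.sin_sq_add_cos_sq ψ]
      have habs2 : |Real.cos ψ + Δ * Real.sin ψ| ≤ C := by
        have := Real.sqrt_le_sqrt hsq
        rwa [Real.sqrt_sq_eq_abs, Real.sqrt_sq hC0.le] at this
      calc |φ 1 - φ 0| = ρ * |Real.cos ψ + Δ * Real.sin ψ| := by
            rw [hval, abs_mul, abs_of_pos hρ]
        _ ≤ ρ * C := mul_le_mul_of_nonneg_left habs2 hρ.le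
    have hwid : max (φ 0) (φ 1) - min (φ 0) (φ 1) ≤ ρ * C := by
      rw [max_sub_min_eq_abs]
      first
      | exact hchord
      | (rw [abs_sub_comm]; exact hchord)
    have hsmall : ρ * C < δ := by
      have h1' : ρ * C ≤ rmax ^ n * C := mul_le_mul_of_nonneg_right hρn hC0.le
      have h2' : rmax ^ n * C < (δ / C) * C := mul_lt_mul_of_pos_right hn hC0
      rw [div_mul_cancel₀ _ hC0.ne'] at h2'
      linarith
    have hx₀eq : x₀ = φ t₀ := by
      have h2 := (h1 t₀ ht₀).2
      rw [ht₀eq] at h2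
      exact congrArg Prod.fst h2
    have hx₀bet : min (φ 0) (φ 1) ≤ x₀ ∧ x₀ ≤ max (φ 0) (φ 1) := by
      rw [hx₀eq]; exact hbetween t₀ ht₀
    -- the error function of the tangent line at x₀
    set e : ℝ → ℝ := fun w => f w - f x₀ - (w - x₀) * m with hedef
    have herr : ∀ w : ℝ, min (φ 0) (φ 1) ≤ w → w ≤ max (φ 0) (φ 1) → |e w| ≤ ε * (ρ * C) := by
      intro w hw1 hw2
      have hwx : |w - x₀| ≤ ρ * C := by
        rw [abs_le]
        constructor <;> [linarith [hx₀bet.2]; linarith [hx₀bet.1]]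
      have hdist : dist w x₀ < δ := by
        rw [Real.dist_eq]
        exact lt_of_le_of_lt hwx hsmall
      have := hδ hdist
      simp only [Real.norm_eq_abs, smul_eq_mul] at this
      calc |e w| = |f w - f x₀ - (w - x₀) * m| := rfl
        _ ≤ ε * |w - x₀| := by
            have h' : f w - f x₀ - (w - x₀) * m = f w - f x₀ - (w - x₀) • m := by
              simp [smul_eq_mul]
            rw [h']
            simpa using this
        _ ≤ ε * (ρ * C) := mul_le_mul_of_nonneg_left hwx hε.le
    -- area scaling
    set u := φ 0 with hu
    set v := φ 1 with hv
    set ξ := φ y with hξ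
    have h0I : (0:ℝ) ∈ Icc (0:ℝ) 1 := by norm_num
    have h1I : (1:ℝ) ∈ Icc (0:ℝ) 1 := by norm_num
    have harea : Ar (u, f u) (v, f v) (ξ, f ξ) = ρ ^ 2 * Ar (0, f 0) (1, f 1) (y, f y) := by
      rw [← (h1 0 h0I).2, ← (h1 1 h1I).2, ← (h1 y hy).2]
      exact Ar_simMap ρ ψ c _ _ _
    have hAval : Ar ((0:ℝ), f 0) (1, f 1) (y, f y) = f y - f 0 - Δ * y := by
      simp only [Ar, hΔ]; ring
    have hrewrite : Ar (u, f u) (v, f v) (ξ, f ξ)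
        = (v - u) * (e ξ - e u) - (e v - e u) * (ξ - u) := by
      simp only [Ar, hedef]; ring
    have hbu := hbetween 0 h0I
    have hbv := hbetween 1 h1I
    have hbξ := hbetween y hy
    have hvu : |v - u| ≤ ρ * C := by rw [hu, hv]; exact hchord
    have hξu : |ξ - u| ≤ ρ * C := by
      rw [abs_le]
      constructor <;> [linarith [hbξ.2, hbu.1]; linarith [hbξ.1, hbu.2]]
    have heu := herr u hbu.1 hbu.2
    have hev' := herr v hbv.1 hbv.2
    have heξ := herr ξ hbξ.1 hbξ.2
    have hbound : |Ar (u, f u) (v, f v) (ξ, f ξ)| ≤ 4 * ε * (ρ * C) ^ 2 := by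
      rw [hrewrite]
      have t1 : |(v - u) * (e ξ - e u)| ≤ (ρ * C) * (2 * (ε * (ρ * C))) := by
        rw [abs_mul]
        apply mul_le_mul hvu _ (abs_nonneg _) (by positivity)
        calc |e ξ - e u| ≤ |e ξ| + |e u| := abs_sub _ _
          _ ≤ 2 * (ε * (ρ * C)) := by linarith
      have t2 : |(e v - e u) * (ξ - u)| ≤ (2 * (ε * (ρ * C))) * (ρ * C) := by
        rw [abs_mul]
        apply mul_le_mul _ hξu (abs_nonneg _) (by positivity)
        calc |e v - e u| ≤ |e v| + |e u| := abs_sub _ _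
          _ ≤ 2 * (ε * (ρ * C)) := by linarith
      calc |(v - u) * (e ξ - e u) - (e v - e u) * (ξ - u)|
          ≤ |(v - u) * (e ξ - e u)| + |(e v - e u) * (ξ - u)| := abs_sub _ _
        _ ≤ (ρ * C) * (2 * (ε * (ρ * C))) + (2 * (ε * (ρ * C))) * (ρ * C) := add_le_add t1 t2
        _ = 4 * ε * (ρ * C) ^ 2 := by ring
    rw [harea, hAval, abs_mul, abs_of_pos (by positivity : (0:ℝ) < ρ ^ 2)] at hbound
    have : (ρ * C) ^ 2 = ρ ^ 2 * C ^ 2 := by ring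
    rw [this] at hbound
    have hρ2 : (0:ℝ) < ρ ^ 2 := by positivity
    have hb2 : ρ ^ 2 * |f y - f 0 - Δ * y| ≤ ρ ^ 2 * (ε * (4 * C ^ 2)) := by
      calc ρ ^ 2 * |f y - f 0 - Δ * y| ≤ 4 * ε * (ρ ^ 2 * C ^ 2) := hbound
        _ = ρ ^ 2 * (ε * (4 * C ^ 2)) := by ring
    exact le_of_mul_le_mul_left hb2 hρ2
  -- conclude
  have hzero : |f y - f 0 - Δ * y| = 0 := by
    by_contra hne
    have hpos : 0 < |f y - f 0 - Δ * y| := lt_of_le_of_ne (abs_nonneg _) (Ne.symm hne)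
    have := habs (|f y - f 0 - Δ * y| / (8 * C ^ 2)) (by positivity)
    rw [div_mul_eq_mul_div] at this
    have hC2ne : C ^ 2 ≠ 0 := by positivity
    have hhalf : |f y - f 0 - Δ * y| * (4 * C ^ 2) / (8 * C ^ 2)
        = |f y - f 0 - Δ * y| / 2 := by
      field_simp
      ring
    rw [hhalf] at this
    linarith
  have := abs_eq_zero.mp hzero
  linarith [this]

/-- the structure of a self-map of the graph: the induced map on x-coordinates -/
lemma graph_phi {f : ℝ → ℝ} (hf : ContinuousOn f (Icc (0:ℝ) 1)) {ρ ψ : ℝ} {c : ℝ × ℝ}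
    (hρ : 0 < ρ) (hm : MapsG f ρ ψ c) :
    StrictMonoOn (fun x => ρ * (x * Real.cos ψ + f x * Real.sin ψ) + c.1) (Icc (0:ℝ) 1) ∨
    StrictAntiOn (fun x => ρ * (x * Real.cos ψ + f x * Real.sin ψ) + c.1) (Icc (0:ℝ) 1) := by
  set φ : ℝ → ℝ := fun x => ρ * (x * Real.cos ψ + f x * Real.sin ψ) + c.1 with hφdef
  have h1 : ∀ x ∈ Icc (0:ℝ) 1, simMap ρ ψ c (x, f x) = (φ x, f (φ x)) := by
    intro x hx
    obtain ⟨t, ht, hteq⟩ := hm x hx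
    have htval : t = φ x := by
      have := congrArg Prod.fst hteq
      rw [simMap_def] at this
      simpa [hφdef] using this.symm
    subst htval
    exact hteq
  have hinj : InjOn φ (Icc (0:ℝ) 1) := by
    intro a ha b hb hab
    have e1 := h1 a ha
    have e2 := h1 b hb
    rw [hab] at e1
    have := simMap_inj hρ c (e1.trans e2.symm)
    exact congrArg Prod.fst this
  have hcont : ContinuousOn φ (Icc (0:ℝ) 1) := by
    apply ContinuousOn.add ?_ continuousOn_const
    apply ContinuousOn.const_smul ?_ ρ
    exact ((continuousOn_id.mul continuousOn_const).add (hf.mul continuousOn_const))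
  exact ContinuousOn.strictMonoOn_of_injOn_Icc' zero_le_one hcont hinj

lemma caseA_mono {f : ℝ → ℝ} (hf : ContinuousOn f (Icc (0:ℝ) 1)) {ρ ψ : ℝ} {c : ℝ × ℝ}
    (hρ : 0 < ρ) (hm : MapsG f ρ ψ c) (hs : Real.sin ψ ≠ 0) :
    MonotoneOn (fun x => f x + (Real.cos ψ / Real.sin ψ) * x) (Icc (0:ℝ) 1) ∨
    AntitoneOn (fun x => f x + (Real.cos ψ / Real.sin ψ) * x) (Icc (0:ℝ) 1) := by
  have heq : ∀ x : ℝ, f x + (Real.cos ψ / Real.sin ψ) * x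
      = (x * Real.cos ψ + f x * Real.sin ψ) / Real.sin ψ := by
    intro x; field_simp; ring
  have hg : ∀ a b : ℝ, (fun x => ρ * (x * Real.cos ψ + f x * Real.sin ψ) + c.1) a
      ≤ (fun x => ρ * (x * Real.cos ψ + f x * Real.sin ψ) + c.1) b →
      (a * Real.cos ψ + f a * Real.sin ψ) ≤ (b * Real.cos ψ + f b * Real.sin ψ) := by
    intro a b hab
    simp only at hab
    nlinarith
  rcases graph_phi hf hρ hm with hmono | hmono
  · rcases lt_or_gt_of_ne hs with hneg | hpos
    · right
      intro a ha b hb hab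
      simp only
      rw [heq a, heq b]
      exact div_le_div_of_nonpos_of_le hneg.le (hg a b (hmono.monotoneOn ha hb hab))
    · left
      intro a ha b hb hab
      simp only
      rw [heq a, heq b]
      exact (div_le_div_iff_of_pos_right hpos).mpr (hg a b (hmono.monotoneOn ha hb hab))
  · rcases lt_or_gt_of_ne hs with hneg | hpos
    · left
      intro a ha b hb hab
      simp only
      rw [heq a, heq b]
      exact div_le_div_of_nonpos_of_le hneg.le (hg b a (hmono.antitoneOn ha hb hab))
    · right
      intro a ha b hb hab
      simp only
      rw [heq a, heq b]
      exact (div_le_div_iff_of_pos_right hpos).mpr (hg b a (hmono.antitoneOn ha hb hab))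

theorem selfSimilar_graph_is_affine (f : ℝ → ℝ)
    (hf : ContinuousOn f (Set.Icc (0 : ℝ) 1))
    (G : Set (ℝ × ℝ)) (hG : G = (fun x => (x, f x)) '' Set.Icc (0 : ℝ) 1)
    (hss : IsSelfSimilar G) :
    ∀ x ∈ Set.Icc (0 : ℝ) 1, f x = f 0 + (f 1 - f 0) * x := by
  obtain ⟨-, k, S, hk, hsim, hunion⟩ := hss
  choose r θ b hmem hSeq using hsim
  haveI : Nonempty (Fin k) := ⟨⟨0, hk⟩⟩
  have hSsim : ∀ i v, S i v = simMap (r i) (θ i) (b i) v := fun i v => hSeq i v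
  have hmaps : ∀ i, MapsG f (r i) (θ i) (b i) := by
    intro i x hx
    have hxG : (x, f x) ∈ G := by rw [hG]; exact ⟨x, hx, rfl⟩
    have hmem' : S i (x, f x) ∈ G := by
      rw [hunion]; exact Set.mem_iUnion.mpr ⟨i, Set.mem_image_of_mem _ hxG⟩
    rw [hG] at hmem'
    obtain ⟨t, ht, hteq⟩ := hmem'
    exact ⟨t, ht, by rw [← hSsim]; exact hteq.symm⟩
  have hcovS : ∀ z ∈ Set.Icc (0:ℝ) 1, ∃ i, ∃ t ∈ Set.Icc (0:ℝ) 1,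
      simMap (r i) (θ i) (b i) (t, f t) = (z, f z) := by
    intro z hz
    have hzG : (z, f z) ∈ G := by rw [hG]; exact ⟨z, hz, rfl⟩
    rw [hunion] at hzG
    obtain ⟨i, hi⟩ := Set.mem_iUnion.mp hzG
    obtain ⟨g, hgG, hgeq⟩ := hi
    rw [hG] at hgG
    obtain ⟨t, ht, rfl⟩ := hgG
    exact ⟨i, t, ht, by rw [← hSsim]; exact hgeq⟩
  set rmax : ℝ := Finset.univ.sup' Finset.univ_nonempty r with hrmaxdef
  have hrmax : ∀ i, r i ≤ rmax := fun i => Finset.le_sup' r (Finset.mem_univ i)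
  have hr0 : 0 < rmax := lt_of_lt_of_le (hmem ⟨0, hk⟩).1 (hrmax _)
  have hr1 : rmax < 1 := by
    rw [hrmaxdef]
    exact (Finset.sup'_lt_iff Finset.univ_nonempty).mpr (fun i _ => (hmem i).2)
  have hcopies := copies r θ b (fun i => (hmem i).1) hrmax hmaps hcovS
  have hfinal : ∃ x₀ ∈ Set.Ioo (0:ℝ) 1, DifferentiableAt ℝ f x₀ := by
    by_cases hA : ∃ i, Real.sin (θ i) ≠ 0
    · obtain ⟨i, hsi⟩ := hA
      exact exists_diff_point (caseA_mono hf (hmem i).1 (hmaps i) hsi)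
    · push_neg at hA
      set dat : Fin k → ℝ × ℝ × ℝ := fun i => (r i * Real.cos (θ i), (b i).1, (b i).2)
        with hdat
      have hcos : ∀ i, Real.cos (θ i) = 1 ∨ Real.cos (θ i) = -1 := by
        intro i
        have hpyth := Real.sin_sq_add_cos_sq (θ i)
        rw [hA i] at hpyth
        have hfact : (Real.cos (θ i) - 1) * (Real.cos (θ i) + 1) = 0 := by nlinarith
        rcases mul_eq_zero.mp hfact with h | h
        · left; linarith
        · right; linarith
      have habs1 : ∀ i, |(dat i).1| = r i := by
        intro i
        have hd1 : (dat i).1 = r i * Real.cos (θ i) := rfl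
        rcases hcos i with h | h <;> rw [hd1, h] <;> simp [abs_of_pos (hmem i).1]
      have hgood : ∀ i, Good f (dat i) := by
        intro i
        constructor
        · intro h0
          have := habs1 i
          rw [h0, abs_zero] at this
          exact absurd this.symm (ne_of_gt (hmem i).1)
        · intro x hx
          obtain ⟨t, ht, hteq⟩ := hmaps i x hx
          rw [simMap_def, Prod.ext_iff] at hteq
          obtain ⟨h1, h2⟩ := hteq
          simp only at h1 h2
          have harg : (dat i).1 * x + (dat i).2.1 = t := by
            have hd1 : (dat i).1 = r i * Real.cos (θ i) := rfl
            have hd2 : (dat i).2.1 = (b i).1 := rfl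
            rw [hd1, hd2]
            linear_combination h1 - r i * f x * hA i
          constructor
          · rw [harg]; exact ht
          · rw [harg]
            have hd1 : (dat i).1 = r i * Real.cos (θ i) := rfl
            have hd2 : (dat i).2.2 = (b i).2 := rfl
            rw [hd1, hd2]
            linear_combination -h2 - r i * x * hA i
      have hcovB : ∀ z ∈ Set.Icc (0:ℝ) 1, ∃ i, ∃ x ∈ Set.Icc (0:ℝ) 1,
          z = (dat i).1 * x + (dat i).2.1 := by
        intro z hz
        obtain ⟨i, t, ht, hteq⟩ := hcovS z hz
        refine ⟨i, t, ht, ?_⟩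
        rw [simMap_def, Prod.ext_iff] at hteq
        obtain ⟨h1, _⟩ := hteq
        simp only at h1
        have hd1 : (dat i).1 = r i * Real.cos (θ i) := rfl
        have hd2 : (dat i).2.1 = (b i).1 := rfl
        rw [hd1, hd2]
        linear_combination -h1 + r i * f t * hA i
      obtain ⟨M, hM⟩ := IsCompact.exists_bound_of_continuousOn isCompact_Icc hf
      have hM' : ∀ x ∈ Set.Icc (0:ℝ) 1, |f x| ≤ M := by
        intro x hx
        have := hM x hx
        rwa [Real.norm_eq_abs] at this
      have hM0 : 0 ≤ M := le_trans (abs_nonneg (f 0)) (hM' 0 (by norm_num))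
      have hΩb : ∀ a ∈ Set.Icc (0:ℝ) 1, ∀ b' ∈ Set.Icc (0:ℝ) 1, |f a - f b'| ≤ 2*M := by
        intro a ha b' hb'
        calc |f a - f b'| ≤ |f a| + |f b'| := abs_sub _ _
          _ ≤ 2*M := by linarith [hM' a ha, hM' b' hb']
      have hlip := lipschitz_of_good (by linarith : (0:ℝ) ≤ 2*M) hΩb hr0 hr1 hk dat
        (fun i => (habs1 i) ▸ hrmax i) hgood hcovB
      apply exists_diff_point (lam := 5*(2*M)) (Or.inl _)
      intro a ha b' hb' hab
      have h1 := abs_le.mp (hlip a ha b' hb' hab)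
      simp only
      nlinarith [h1.1, h1.2]
  obtain ⟨x₀, hx₀, hdiff⟩ := hfinal
  exact affine_of_diffpt hf hr0 hr1 hcopies hx₀ hdiff
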